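/- Let 𝓑 be a basis of a Banach space X and 𝐧 a strictly increasing sequence of positive integers. The following are equivalent: (i) 𝓑 is (𝐧, strong partially greedy); (ii) 𝓑 is quasi-greedy and (𝐧, PSLC); (iii) 𝓑 is quasi-greedy and (𝐧, superconservative); (iv) 𝓑 is quasi-greedy and (𝐧, conservative). -/

import Mathlib

open scoped BigOperators ENNReal NNReal

/-- The collection `𝕋(𝐧)`: pairs of finite sets `(A, D)` with `A ⊆ 𝐧`, `|A| ≤ |D|`
and `A < D ∩ 𝐧`. -/
def TPair (seq : ℕ → ℕ) (A D : Finset ℕ) : Prop :=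
  (↑A : Set ℕ) ⊆ Set.range seq ∧ A.card ≤ D.card ∧
    ∀ a ∈ A, ∀ d ∈ D, d ∈ Set.range seq → a < d

/-- The collection `𝕊(𝐧)`: pairs of finite sets `(A, D)` with `A ⊆ 𝐧` and `|A| ≤ |D|`. -/
def SPair (seq : ℕ → ℕ) (A D : Finset ℕ) : Prop :=
  (↑A : Set ℕ) ⊆ Set.range seq ∧ A.card ≤ D.card

/-- The interval `{n_{k+1}, …, n_{k+m}}` of `m` consecutive terms of the sequence `seq`
(0-indexed: `seq k, …, seq (k+m-1)`). -/
def intervalSet (seq : ℕ → ℕ) (k m : ℕ) : Finset ℕ :=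
  (Finset.range m).image fun i => seq (k + i)

/-- The (1-based) index `ι(max A)` of the largest element of `A` in the sequence `seq`
(`0` if `A` is empty). -/
noncomputable def iotaMax (seq : ℕ → ℕ) (A : Finset ℕ) : ℕ :=
  if h : A.Nonempty then sInf {i | seq i = A.max' h} + 1 else 0

/-- The collection `𝕋^ω(𝐧)`: pairs of finite sets `(A, D)` with `A ⊆ 𝐧`, `ω(A) ≤ ω(D)`
and `A < D ∩ 𝐧`. -/
def WTPair (w : Set ℕ → ℝ≥0∞) (seq : ℕ → ℕ) (A D : Finset ℕ) : Prop :=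
  (↑A : Set ℕ) ⊆ Set.range seq ∧ w (↑A : Set ℕ) ≤ w (↑D : Set ℕ) ∧
    ∀ a ∈ A, ∀ d ∈ D, d ∈ Set.range seq → a < d

/-- A (semi-normalized) basis `(e_n)` of a Banach space `X`, together with its biorthogonal
functionals `(e_n^*)`: the span of the `e_n` is norm-dense, `e_j^*(e_k) = δ_{jk}`, and the
norms of the `e_n` and `e_n^*` are bounded above and away from zero. -/
structure BasisOf (𝕜 : Type*) (X : Type*) [RCLike 𝕜] [NormedAddCommGroup X]
    [NormedSpace 𝕜 X] where
  e : ℕ → X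
  coord : ℕ → X →L[𝕜] 𝕜
  dense_span : Dense (↑(Submodule.span 𝕜 (Set.range e)) : Set X)
  biorth : ∀ j k : ℕ, coord j (e k) = if j = k then (1 : 𝕜) else 0
  norm_bounds : ∃ c₁ c₂ : ℝ, 0 < c₁ ∧ (∀ n, c₁ ≤ ‖e n‖ ∧ c₁ ≤ ‖coord n‖) ∧
    ∀ n, ‖e n‖ ≤ c₂ ∧ ‖coord n‖ ≤ c₂

namespace BasisOf

variable {𝕜 : Type*} {X : Type*} [RCLike 𝕜] [NormedAddCommGroup X] [NormedSpace 𝕜 X]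
variable (B : BasisOf 𝕜 X)

/-- The projection `P_A(x) = ∑_{n ∈ A} e_n^*(x) e_n`. -/
noncomputable def proj (A : Finset ℕ) (x : X) : X := ∑ n ∈ A, B.coord n x • B.e n

/-- `1_{εA} = ∑_{n ∈ A} ε_n e_n`. -/
noncomputable def sgnSum (ε : ℕ → 𝕜) (A : Finset ℕ) : X := ∑ n ∈ A, ε n • B.e n

/-- `1_A = ∑_{n ∈ A} e_n`. -/
noncomputable def ones (A : Finset ℕ) : X := ∑ n ∈ A, B.e n

/-- `P^𝐧_m(x) = ∑_{i=1}^m e_{n_i}^*(x) e_{n_i}`, the projection on the first `m` terms of the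
subsequence given by `seq`. -/
noncomputable def projSeq (seq : ℕ → ℕ) (m : ℕ) (x : X) : X :=
  ∑ i ∈ Finset.range m, B.coord (seq i) x • B.e (seq i)

/-- `A` is a greedy set of `x`: the coefficients inside `A` dominate those outside. -/
def IsGreedySet (x : X) (A : Finset ℕ) : Prop :=
  ∀ a ∈ A, ∀ b ∉ A, ‖B.coord b x‖ ≤ ‖B.coord a x‖

/-- The support `{n : e_n^*(x) ≠ 0}`. -/
def supp (x : X) : Set ℕ := {n | B.coord n x ≠ 0}

/-- `𝓑` is `C`-(`𝐧`, strong partially greedy):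
`‖x - G_m(x)‖ ≤ C ⋅ σ̂^𝐧_m(x)` for all `x`, all `m ≥ 1` and all greedy sums. -/
def SPGWith (seq : ℕ → ℕ) (C : ℝ) : Prop :=
  ∀ x : X, ∀ m : ℕ, 1 ≤ m → ∀ A : Finset ℕ, A.card = m → B.IsGreedySet x A →
    ∀ k : ℕ, k ≤ m → ‖x - B.proj A x‖ ≤ C * ‖x - B.projSeq seq k x‖

/-- `𝓑` is (`𝐧`, strong partially greedy). -/
def SPG (seq : ℕ → ℕ) : Prop := ∃ C : ℝ, 1 ≤ C ∧ B.SPGWith seq C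

/-- `𝓑` is quasi-greedy with constant `C`. -/
def QuasiGreedyWith (C : ℝ) : Prop :=
  ∀ x : X, ∀ A : Finset ℕ, A.Nonempty → B.IsGreedySet x A → ‖B.proj A x‖ ≤ C * ‖x‖

/-- `𝓑` is quasi-greedy. -/
def QuasiGreedy : Prop := ∃ C : ℝ, B.QuasiGreedyWith C

/-- `𝓑` is suppression quasi-greedy with constant `C`. -/
def SuppQGWith (C : ℝ) : Prop :=
  ∀ x : X, ∀ A : Finset ℕ, A.Nonempty → B.IsGreedySet x A → ‖x - B.proj A x‖ ≤ C * ‖x‖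

/-- `𝓑` is `C`-(`𝐧`, PSLC). -/
def PSLCWith (seq : ℕ → ℕ) (C : ℝ) : Prop :=
  ∀ x : X, (∀ n, ‖B.coord n x‖ ≤ 1) → ∀ A D : Finset ℕ, TPair seq A D →
    (∀ d ∈ D, B.coord d x = 0) →
    (∀ a ∈ A, ∀ j : ℕ, (j ∈ D ∨ B.coord j x ≠ 0) → j ∈ Set.range seq → a < j) →
    ∀ ε δ : ℕ → 𝕜, (∀ n, ‖ε n‖ = 1) → (∀ n, ‖δ n‖ = 1) →
      ‖x + B.sgnSum ε A‖ ≤ C * ‖x + B.sgnSum δ D‖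

/-- `𝓑` is (`𝐧`, PSLC). -/
def PSLC (seq : ℕ → ℕ) : Prop := ∃ C : ℝ, 1 ≤ C ∧ B.PSLCWith seq C

/-- `𝓑` is (`𝐧`, superconservative) with constant `C`. -/
def SuperconservativeWith (seq : ℕ → ℕ) (C : ℝ) : Prop :=
  ∀ A D : Finset ℕ, TPair seq A D →
    ∀ ε δ : ℕ → 𝕜, (∀ n, ‖ε n‖ = 1) → (∀ n, ‖δ n‖ = 1) →
      ‖B.sgnSum ε A‖ ≤ C * ‖B.sgnSum δ D‖

/-- `𝓑` is (`𝐧`, superconservative). -/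
def Superconservative (seq : ℕ → ℕ) : Prop :=
  ∃ C : ℝ, 0 < C ∧ B.SuperconservativeWith seq C

/-- `𝓑` is (`𝐧`, conservative) with constant `C`. -/
def ConservativeWith (seq : ℕ → ℕ) (C : ℝ) : Prop :=
  ∀ A D : Finset ℕ, TPair seq A D → ‖B.ones A‖ ≤ C * ‖B.ones D‖

/-- `𝓑` is (`𝐧`, conservative). -/
def Conservative (seq : ℕ → ℕ) : Prop := ∃ C : ℝ, 0 < C ∧ B.ConservativeWith seq C

/-- `𝓑` is (`𝐧`, democratic) with constant `C`. -/
def DemocraticWith (seq : ℕ → ℕ) (C : ℝ) : Prop :=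
  ∀ A D : Finset ℕ, SPair seq A D → ‖B.ones A‖ ≤ C * ‖B.ones D‖

/-- `𝓑` is (`𝐧`, democratic). -/
def Democratic (seq : ℕ → ℕ) : Prop := ∃ C : ℝ, B.DemocraticWith seq C

/-- `𝓑` is (`𝐧`, almost greedy) with constant `C`:
`‖x - G_m(x)‖ ≤ C σ̃^𝐧_m(x)` where `σ̃^𝐧_m(x) = inf {‖x - P_D(x)‖ : D ⊆ 𝐧, |D| = m}`. -/
def AlmostGreedyWith (seq : ℕ → ℕ) (C : ℝ) : Prop :=
  ∀ x : X, ∀ m : ℕ, 1 ≤ m → ∀ A : Finset ℕ, A.card = m → B.IsGreedySet x A →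
    ∀ D : Finset ℕ, (↑D : Set ℕ) ⊆ Set.range seq → D.card = m →
      ‖x - B.proj A x‖ ≤ C * ‖x - B.proj D x‖

/-- `𝓑` is (`𝐧`, almost greedy). -/
def AlmostGreedy (seq : ℕ → ℕ) : Prop := ∃ C : ℝ, 1 ≤ C ∧ B.AlmostGreedyWith seq C

/-- `𝓑` is 1-unconditional. -/
def OneUnconditional : Prop :=
  ∀ (F : Finset ℕ) (a b : ℕ → 𝕜), (∀ n, ‖a n‖ ≤ ‖b n‖) →
    ‖∑ n ∈ F, a n • B.e n‖ ≤ ‖∑ n ∈ F, b n • B.e n‖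

/-- `𝓑` is `C`-(`𝐧`, consecutive almost greedy) of type I. -/
def CAGIWith (seq : ℕ → ℕ) (C : ℝ) : Prop :=
  ∀ x : X, ∀ m : ℕ, 1 ≤ m → ∀ A : Finset ℕ, A.card = m → B.IsGreedySet x A →
    ∀ k : ℕ, ‖x - B.proj A x‖ ≤ C * ‖x - B.proj (intervalSet seq k m) x‖

/-- `𝓑` is `C`-(`𝐧`, consecutive almost greedy) of type II. -/
def CAGIIWith (seq : ℕ → ℕ) (C : ℝ) : Prop :=
  ∀ x : X, ∀ m : ℕ, 1 ≤ m → ∀ A : Finset ℕ, A.card = m → B.IsGreedySet x A →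
    ∀ k p : ℕ, ((↑(intervalSet seq k p) : Set ℕ) ∩ B.supp x).ncard ≤ m →
      ‖x - B.proj A x‖ ≤ C * ‖x - B.proj (intervalSet seq k p) x‖

/-- `𝓑` is `C`-(`𝐧`, RSLC). -/
def RSLCWith (seq : ℕ → ℕ) (C : ℝ) : Prop :=
  ∀ x : X, (∀ n, ‖B.coord n x‖ ≤ 1) → ∀ A D : Finset ℕ, SPair seq A D →
    (∀ d ∈ D, B.coord d x = 0) →
    (∀ j : ℕ, (j ∈ D ∨ B.coord j x ≠ 0) → j ∈ Set.range seq →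
      (∀ a ∈ A, j < a) ∨ (∀ a ∈ A, a < j)) →
    ∀ ε δ : ℕ → 𝕜, (∀ n, ‖ε n‖ = 1) → (∀ n, ‖δ n‖ = 1) →
      ‖x + B.sgnSum ε A‖ ≤ C * ‖x + B.sgnSum δ D‖

/-- `𝓑` is `C`-(`𝐧`, SLC). -/
def SLCWith (seq : ℕ → ℕ) (C : ℝ) : Prop :=
  ∀ x : X, (∀ n, ‖B.coord n x‖ ≤ 1) → ∀ A D : Finset ℕ, SPair seq A D →
    Disjoint A D → (∀ a ∈ A, B.coord a x = 0) → (∀ d ∈ D, B.coord d x = 0) →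
    ∀ ε δ : ℕ → 𝕜, (∀ n, ‖ε n‖ = 1) → (∀ n, ‖δ n‖ = 1) →
      ‖x + B.sgnSum ε A‖ ≤ C * ‖x + B.sgnSum δ D‖

/-- The Lebesgue-type parameter `L̂^𝐧_m`: the least constant `C ∈ [0,∞]` with
`‖x - G_m(x)‖ ≤ C σ̂^𝐧_m(x)` for all `x` and all greedy sums `G_m(x)`. -/
noncomputable def Lhat (seq : ℕ → ℕ) (m : ℕ) : ℝ≥0∞ :=
  sInf {C : ℝ≥0∞ | ∀ (x : X) (A : Finset ℕ), A.card = m → B.IsGreedySet x A →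
    ∀ k : ℕ, k ≤ m →
      (‖x - B.proj A x‖₊ : ℝ≥0∞) ≤ C * (‖x - B.projSeq seq k x‖₊ : ℝ≥0∞)}

/-- The parameter `g_m^c`. -/
noncomputable def gc (m : ℕ) : ℝ≥0∞ :=
  ⨆ (x : X) (_ : x ≠ 0) (A : Finset ℕ) (_ : A.card ≤ m) (_ : B.IsGreedySet x A),
    (‖x - B.proj A x‖₊ : ℝ≥0∞) / (‖x‖₊ : ℝ≥0∞)

/-- The parameter `g̃_m`. -/
noncomputable def gtilde (m : ℕ) : ℝ≥0∞ :=
  ⨆ (x : X) (_ : x ≠ 0) (A : Finset ℕ) (A' : Finset ℕ) (_ : A ⊆ A') (_ : A.card < A'.card)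
    (_ : A'.card ≤ m) (_ : B.IsGreedySet x A) (_ : B.IsGreedySet x A'),
    (‖B.proj A' x - B.proj A x‖₊ : ℝ≥0∞) / (‖x‖₊ : ℝ≥0∞)

/-- The parameter `sc^𝐧_m`. -/
noncomputable def scParam (seq : ℕ → ℕ) (m : ℕ) : ℝ≥0∞ :=
  ⨆ (A : Finset ℕ) (D : Finset ℕ) (_ : TPair seq A D) (_ : D.card ≤ m)
    (_ : ∀ a ∈ A, a ≤ seq (m - 1)) (ε : ℕ → 𝕜) (_ : ∀ n, ‖ε n‖ = 1)
    (δ : ℕ → 𝕜) (_ : ∀ n, ‖δ n‖ = 1),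
    (‖B.sgnSum ε A‖₊ : ℝ≥0∞) / (‖B.sgnSum δ D‖₊ : ℝ≥0∞)

/-- The parameter `ω^𝐧_m`. -/
noncomputable def omegaParam (seq : ℕ → ℕ) (m : ℕ) : ℝ≥0∞ :=
  ⨆ (x : X) (_ : ∀ n, ‖B.coord n x‖ ≤ 1) (A : Finset ℕ) (D : Finset ℕ)
    (_ : (↑A : Set ℕ) ⊆ Set.range seq) (_ : A.card ≤ D.card) (_ : D.card ≤ m)
    (_ : ∀ a ∈ A, a ≤ seq (m - 1)) (_ : ∀ d ∈ D, B.coord d x = 0)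
    (_ : ∀ a ∈ A, ∀ j : ℕ, (j ∈ D ∨ B.coord j x ≠ 0) → j ∈ Set.range seq → a < j)
    (ε : ℕ → 𝕜) (_ : ∀ n, ‖ε n‖ = 1) (δ : ℕ → 𝕜) (_ : ∀ n, ‖δ n‖ = 1),
    (‖x + B.sgnSum ε A‖₊ : ℝ≥0∞) / (‖x + B.sgnSum δ D‖₊ : ℝ≥0∞)

/-- The parameter `ω̂^𝐧_m`. -/
noncomputable def omegaHatParam (seq : ℕ → ℕ) (m : ℕ) : ℝ≥0∞ :=
  ⨆ (x : X) (_ : ∀ n, ‖B.coord n x‖ ≤ 1) (A : Finset ℕ) (D : Finset ℕ)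
    (_ : (↑A : Set ℕ) ⊆ Set.range seq) (_ : A.card ≤ D.card) (_ : D.card ≤ m)
    (_ : ∀ a ∈ A, a ≤ seq (m - 1))
    (_ : ∀ d ∈ D, B.coord d (x - B.proj A x) = 0)
    (_ : ∀ a ∈ A, ∀ j : ℕ, (j ∈ D ∨ B.coord j (x - B.proj A x) ≠ 0) →
      j ∈ Set.range seq → a < j)
    (ε : ℕ → 𝕜) (_ : ∀ n, ‖ε n‖ = 1),
    (‖x‖₊ : ℝ≥0∞) / (‖x - B.proj A x + B.sgnSum ε D‖₊ : ℝ≥0∞)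

/-- `κ = sup_{j,k} ‖e_j‖ ‖e_k^*‖`. -/
noncomputable def kappa : ℝ≥0∞ :=
  ⨆ (j : ℕ) (k : ℕ), ((‖B.e j‖₊ * ‖B.coord k‖₊ : ℝ≥0) : ℝ≥0∞)

/-- `𝓑` is `𝐬`-(`𝐧`, strong partially greedy) with constant `C`:
the strong partially greedy inequality for all orders `m` in the sequence `s`. -/
def SPGOnWith (seq : ℕ → ℕ) (s : ℕ → ℕ) (C : ℝ) : Prop :=
  ∀ x : X, ∀ i : ℕ, ∀ A : Finset ℕ, A.card = s i → B.IsGreedySet x A →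
    ∀ k : ℕ, k ≤ s i → ‖x - B.proj A x‖ ≤ C * ‖x - B.projSeq seq k x‖

/-- `𝓑` is (`λ`, `𝐧`, strong partially greedy). -/
def LamSPG (seq : ℕ → ℕ) (lam : ℝ) : Prop :=
  ∃ C : ℝ, 1 ≤ C ∧ ∀ x : X, ∀ m : ℕ, 1 ≤ m →
    ∀ A : Finset ℕ, A.card = ⌈lam * (m : ℝ)⌉₊ → B.IsGreedySet x A →
      ∀ k : ℕ, k ≤ m → ‖x - B.proj A x‖ ≤ C * ‖x - B.projSeq seq k x‖

/-- `𝓑` is (`λ`, `𝐧`, PSLC). -/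
def LamPSLC (seq : ℕ → ℕ) (lam : ℝ) : Prop :=
  ∃ C : ℝ, 1 ≤ C ∧ ∀ x : X, (∀ n, ‖B.coord n x‖ ≤ 1) →
    ∀ A D : Finset ℕ, (↑A : Set ℕ) ⊆ Set.range seq → A.card ≤ D.card →
      (lam - 1) * (iotaMax seq A : ℝ) + A.card ≤ D.card →
      (∀ d ∈ D, B.coord d x = 0) →
      (∀ a ∈ A, ∀ j : ℕ, (j ∈ D ∨ B.coord j x ≠ 0) → j ∈ Set.range seq → a < j) →
      ∀ ε δ : ℕ → 𝕜, (∀ n, ‖ε n‖ = 1) → (∀ n, ‖δ n‖ = 1) →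
        ‖x + B.sgnSum ε A‖ ≤ C * ‖x + B.sgnSum δ D‖

/-- `𝓑` is (`λ`, `𝐧`, superconservative). -/
def LamSuperconservative (seq : ℕ → ℕ) (lam : ℝ) : Prop :=
  ∃ C : ℝ, 0 < C ∧ ∀ A D : Finset ℕ, TPair seq A D →
    (lam - 1) * (iotaMax seq A : ℝ) + A.card ≤ D.card →
    ∀ ε δ : ℕ → 𝕜, (∀ n, ‖ε n‖ = 1) → (∀ n, ‖δ n‖ = 1) →
      ‖B.sgnSum ε A‖ ≤ C * ‖B.sgnSum δ D‖

/-- `𝓑` is (`λ`, `𝐧`, conservative). -/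
def LamConservative (seq : ℕ → ℕ) (lam : ℝ) : Prop :=
  ∃ C : ℝ, 0 < C ∧ ∀ A D : Finset ℕ, TPair seq A D →
    (lam - 1) * (iotaMax seq A : ℝ) + A.card ≤ D.card →
    ‖B.ones A‖ ≤ C * ‖B.ones D‖

/-- `𝓑` is `ω`-(`𝐧`, strong partially greedy) for the weight on sets `w`. -/
def WSPG (seq : ℕ → ℕ) (w : Set ℕ → ℝ≥0∞) : Prop :=
  ∃ C : ℝ, 1 ≤ C ∧ ∀ x : X, ∀ m : ℕ, 1 ≤ m → ∀ A : Finset ℕ, A.card = m →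
    B.IsGreedySet x A → ∀ m' : ℕ,
      w (↑((Finset.range m').image seq \ A) : Set ℕ) ≤
        w (↑(A \ (Finset.range m').image seq) : Set ℕ) →
      ‖x - B.proj A x‖ ≤ C * ‖x - B.proj ((Finset.range m').image seq) x‖

/-- `𝓑` is `ω`-(`𝐧`, PSLC). -/
def WPSLC (seq : ℕ → ℕ) (w : Set ℕ → ℝ≥0∞) : Prop :=
  ∃ C : ℝ, 1 ≤ C ∧ ∀ x : X, (∀ n, ‖B.coord n x‖ ≤ 1) →
    ∀ A D : Finset ℕ, WTPair w seq A D →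
      (∀ d ∈ D, B.coord d x = 0) →
      (∀ a ∈ A, ∀ j : ℕ, (j ∈ D ∨ B.coord j x ≠ 0) → j ∈ Set.range seq → a < j) →
      ∀ ε δ : ℕ → 𝕜, (∀ n, ‖ε n‖ = 1) → (∀ n, ‖δ n‖ = 1) →
        ‖x + B.sgnSum ε A‖ ≤ C * ‖x + B.sgnSum δ D‖

/-- `𝓑` is `ω`-(`𝐧`, superconservative). -/
def WSuperconservative (seq : ℕ → ℕ) (w : Set ℕ → ℝ≥0∞) : Prop :=
  ∃ C : ℝ, 0 < C ∧ ∀ A D : Finset ℕ, WTPair w seq A D →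
    ∀ ε δ : ℕ → 𝕜, (∀ n, ‖ε n‖ = 1) → (∀ n, ‖δ n‖ = 1) →
      ‖B.sgnSum ε A‖ ≤ C * ‖B.sgnSum δ D‖

/-- `𝓑` is `ω`-(`𝐧`, conservative). -/
def WConservative (seq : ℕ → ℕ) (w : Set ℕ → ℝ≥0∞) : Prop :=
  ∃ C : ℝ, 0 < C ∧ ∀ A D : Finset ℕ, WTPair w seq A D → ‖B.ones A‖ ≤ C * ‖B.ones D‖

section Aux

open RCLike Finset

variable {𝕜 : Type*} {X : Type*} [RCLike 𝕜] [NormedAddCommGroup X] [NormedSpace 𝕜 X]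
variable (B : BasisOf 𝕜 X)

lemma coord_sum (n : ℕ) (S : Finset ℕ) (c : ℕ → 𝕜) :
    B.coord n (∑ m ∈ S, c m • B.e m) = if n ∈ S then c n else 0 := by
  rw [map_sum]
  simp only [map_smul, B.biorth, smul_eq_mul, mul_ite, mul_one, mul_zero]
  rw [Finset.sum_ite_eq S n c]

lemma coord_proj (n : ℕ) (S : Finset ℕ) (x : X) :
    B.coord n (B.proj S x) = if n ∈ S then B.coord n x else 0 :=
  coord_sum B n S _

lemma coord_sgnSum (n : ℕ) (S : Finset ℕ) (ε : ℕ → 𝕜) :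
    B.coord n (B.sgnSum ε S) = if n ∈ S then ε n else 0 :=
  coord_sum B n S _

lemma proj_union {S T : Finset ℕ} (h : Disjoint S T) (x : X) :
    B.proj (S ∪ T) x = B.proj S x + B.proj T x :=
  Finset.sum_union h

lemma proj_congr {S : Finset ℕ} {x y : X} (h : ∀ n ∈ S, B.coord n x = B.coord n y) :
    B.proj S x = B.proj S y :=
  Finset.sum_congr rfl fun n hn => by rw [h n hn]

/-- convexity: `‖u + t w‖ ≤ max ‖u + w‖ ‖u - w‖` for `|t| ≤ 1`. -/
lemma norm_add_real_smul_le_max (u w : X) (t : ℝ) (ht : |t| ≤ 1) :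
    ‖u + ((t : 𝕜)) • w‖ ≤ max ‖u + w‖ ‖u - w‖ := by
  rw [abs_le] at ht
  have key : u + ((t : 𝕜)) • w
      = (((1 + t) / 2 : ℝ) : 𝕜) • (u + w) + (((1 - t) / 2 : ℝ) : 𝕜) • (u - w) := by
    have h1 : ((((1 + t) / 2 : ℝ) : 𝕜)) + (((1 - t) / 2 : ℝ) : 𝕜) = 1 := by
      push_cast; ring
    have h2 : ((((1 + t) / 2 : ℝ) : 𝕜)) - (((1 - t) / 2 : ℝ) : 𝕜) = (t : 𝕜) := by
      push_cast; ring
    rw [smul_add, smul_sub]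
    rw [show (((1 + t) / 2 : ℝ) : 𝕜) • u + (((1 + t) / 2 : ℝ) : 𝕜) • w +
        ((((1 - t) / 2 : ℝ) : 𝕜) • u - (((1 - t) / 2 : ℝ) : 𝕜) • w)
        = ((((1 + t) / 2 : ℝ) : 𝕜) + (((1 - t) / 2 : ℝ) : 𝕜)) • u +
          ((((1 + t) / 2 : ℝ) : 𝕜) - (((1 - t) / 2 : ℝ) : 𝕜)) • w by
      rw [add_smul, sub_smul]; abel]
    rw [h1, h2, one_smul]
  rw [key]
  have e1 : ‖(((1 + t) / 2 : ℝ) : 𝕜) • (u + w)‖ = (1 + t) / 2 * ‖u + w‖ := by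
    rw [norm_smul, RCLike.norm_ofReal, abs_of_nonneg (by linarith)]
  have e2 : ‖(((1 - t) / 2 : ℝ) : 𝕜) • (u - w)‖ = (1 - t) / 2 * ‖u - w‖ := by
    rw [norm_smul, RCLike.norm_ofReal, abs_of_nonneg (by linarith)]
  calc ‖_ + _‖ ≤ _ := norm_add_le _ _
    _ = (1 + t) / 2 * ‖u + w‖ + (1 - t) / 2 * ‖u - w‖ := by rw [e1, e2]
    _ ≤ (1 + t) / 2 * max ‖u + w‖ ‖u - w‖ + (1 - t) / 2 * max ‖u + w‖ ‖u - w‖ := by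
        gcongr
        · linarith
        · exact le_max_left _ _
        · linarith
        · exact le_max_right _ _
    _ = max ‖u + w‖ ‖u - w‖ := by ring

/-- hypercube convexity, real coefficients, with affine shift. -/
lemma convex_real (v : ℕ → X) (M : ℝ) :
    ∀ (F : Finset ℕ) (c : X) (α : ℕ → ℝ),
      (∀ θ : ℕ → ℝ, (∀ n, θ n = 1 ∨ θ n = -1) →
        ‖c + ∑ n ∈ F, ((θ n : 𝕜)) • v n‖ ≤ M) →
      (∀ n ∈ F, |α n| ≤ 1) → ‖c + ∑ n ∈ F, ((α n : 𝕜)) • v n‖ ≤ M := by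
  intro F
  induction F using Finset.induction_on with
  | empty =>
    intro c α h _
    simpa using h (fun _ => 1) (fun _ => Or.inl rfl)
  | insert a F ha ih =>
    intro c α h hα
    rw [Finset.sum_insert ha]
    rw [show c + ((α a : 𝕜) • v a + ∑ n ∈ F, ((α n : 𝕜)) • v n)
      = (c + (α a : 𝕜) • v a) + ∑ n ∈ F, ((α n : 𝕜)) • v n by abel]
    apply ih (c + (α a : 𝕜) • v a) α _ (fun n hn => hα n (Finset.mem_insert_of_mem hn))
    intro θ hθ
    rw [show c + (α a : 𝕜) • v a + ∑ n ∈ F, ((θ n : 𝕜)) • v n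
      = (c + ∑ n ∈ F, ((θ n : 𝕜)) • v n) + (α a : 𝕜) • v a by abel]
    refine le_trans (norm_add_real_smul_le_max _ _ _ (hα a (Finset.mem_insert_self a F))) ?_
    have hb : ∀ s : ℝ, s = 1 ∨ s = -1 →
        ‖c + ∑ n ∈ F, ((θ n : 𝕜)) • v n + (s : 𝕜) • v a‖ ≤ M := by
      intro s hs
      have := h (Function.update θ a s) (by
        intro n
        rcases eq_or_ne n a with rfl | hne
        · simpa using hs
        · simpa [Function.update_of_ne hne] using hθ n)
      rw [Finset.sum_insert ha] at this
      have hsum : ∑ n ∈ F, ((Function.update θ a s n : 𝕜)) • v n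
          = ∑ n ∈ F, ((θ n : 𝕜)) • v n := by
        apply Finset.sum_congr rfl
        intro n hn
        rw [Function.update_of_ne (by rintro rfl; exact ha hn)]
      rw [hsum] at this
      calc ‖c + ∑ n ∈ F, ((θ n : 𝕜)) • v n + (s : 𝕜) • v a‖
          = ‖c + ((s:𝕜) • v a + ∑ n ∈ F, ((θ n : 𝕜)) • v n)‖ := by
            congr 1; abel
        _ ≤ M := by
            simpa [Function.update_self] using this
    have h1 := hb 1 (Or.inl rfl)
    have h2 := hb (-1) (Or.inr rfl)
    rw [max_le_iff]
    constructor
    · simpa using h1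
    · have : c + ∑ n ∈ F, ((θ n : 𝕜)) • v n - v a
        = c + ∑ n ∈ F, ((θ n : 𝕜)) • v n + ((-1 : ℝ) : 𝕜) • v a := by
        push_cast
        rw [neg_smul, one_smul]
        abel
      rw [this]
      exact h2

end Aux

section Aux2
open RCLike Finset
variable {𝕜 : Type*} {X : Type*} [RCLike 𝕜] [NormedAddCommGroup X] [NormedSpace 𝕜 X]
variable (B : BasisOf 𝕜 X)

lemma norm_I_le_one' : ‖(RCLike.I : 𝕜)‖ ≤ 1 := by
  rcases @RCLike.I_mul_I_ax 𝕜 _ with h | h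
  · simp [h]
  · have : ‖(RCLike.I:𝕜)‖ * ‖(RCLike.I:𝕜)‖ = 1 := by rw [← norm_mul, h]; simp
    nlinarith [norm_nonneg (RCLike.I : 𝕜)]

/-- hypercube convexity, `𝕜` coefficients of modulus at most one. -/
lemma convexK (F : Finset ℕ) (v : ℕ → X) (a : ℕ → 𝕜) (M : ℝ)
    (hθ : ∀ θ : ℕ → ℝ, (∀ n, θ n = 1 ∨ θ n = -1) →
      ‖∑ n ∈ F, ((θ n : 𝕜)) • v n‖ ≤ M)
    (ha : ∀ n ∈ F, ‖a n‖ ≤ 1) : ‖∑ n ∈ F, a n • v n‖ ≤ 2 * M := by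
  have hsplit : ∑ n ∈ F, a n • v n
      = (0 + ∑ n ∈ F, ((re (a n) : ℝ) : 𝕜) • v n)
        + (RCLike.I : 𝕜) • (0 + ∑ n ∈ F, ((im (a n) : ℝ) : 𝕜) • v n) := by
    rw [zero_add, zero_add, smul_sum, ← Finset.sum_add_distrib]
    apply Finset.sum_congr rfl
    intro n _
    rw [smul_comm, ← smul_assoc, smul_eq_mul, ← add_smul]
    congr 1
    rw [mul_comm ((im (a n) : ℝ) : 𝕜) RCLike.I, mul_comm (RCLike.I) ]
    exact (RCLike.re_add_im (a n)).symm
  rw [hsplit]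
  have hre : ‖(0:X) + ∑ n ∈ F, ((re (a n) : ℝ) : 𝕜) • v n‖ ≤ M := by
    apply convex_real v M F 0 (fun n => re (a n))
    · intro θ hθ'; simpa using hθ θ hθ'
    · intro n hn; exact le_trans (RCLike.abs_re_le_norm _) (ha n hn)
  have him : ‖(0:X) + ∑ n ∈ F, ((im (a n) : ℝ) : 𝕜) • v n‖ ≤ M := by
    apply convex_real v M F 0 (fun n => im (a n))
    · intro θ hθ'; simpa using hθ θ hθ'
    · intro n hn; exact le_trans (RCLike.abs_im_le_norm _) (ha n hn)
  calc ‖_ + _‖ ≤ ‖(0:X) + ∑ n ∈ F, ((re (a n) : ℝ) : 𝕜) • v n‖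
        + ‖(RCLike.I : 𝕜) • ((0:X) + ∑ n ∈ F, ((im (a n) : ℝ) : 𝕜) • v n)‖ :=
      norm_add_le _ _
    _ ≤ M + M := by
        refine add_le_add hre ?_
        rw [norm_smul]
        calc ‖(RCLike.I : 𝕜)‖ * ‖(0:X) + ∑ n ∈ F, ((im (a n) : ℝ) : 𝕜) • v n‖
            ≤ 1 * M := mul_le_mul norm_I_le_one' him (norm_nonneg _) zero_le_one
          _ = M := one_mul M
    _ = 2 * M := by ring
end Aux2

section Aux3
open RCLike Finset
variable {𝕜 : Type*} {X : Type*} [RCLike 𝕜] [NormedAddCommGroup X] [NormedSpace 𝕜 X]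
variable (B : BasisOf 𝕜 X)

/-- the sign function of `z`. -/
noncomputable def sgnOf (z : X) (n : ℕ) : 𝕜 :=
  if B.coord n z = 0 then 1 else (‖B.coord n z‖ : 𝕜)⁻¹ * B.coord n z

lemma norm_sgnOf (z : X) (n : ℕ) : ‖sgnOf B z n‖ = 1 := by
  unfold sgnOf
  split_ifs with h
  · exact norm_one
  · rw [norm_mul, norm_inv, RCLike.norm_ofReal, abs_norm]
    rw [inv_mul_cancel₀ (norm_ne_zero_iff.mpr h)]

lemma sgnOf_smul (z : X) (n : ℕ) (h : B.coord n z ≠ 0) (w : X) :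
    sgnOf B z n • w = ((‖B.coord n z‖⁻¹ : ℝ) : 𝕜) • (B.coord n z • w) := by
  unfold sgnOf
  rw [if_neg h, smul_smul, RCLike.ofReal_inv]

lemma abel_claim (C : ℝ) (hC : 0 ≤ C) (hqg : B.QuasiGreedyWith C) (z : X) :
    ∀ r : ℕ, ∀ F : Finset ℕ, F.card = r + 1 → B.IsGreedySet z F →
      (∀ n ∈ F, B.coord n z ≠ 0) → ∀ (hne : F.Nonempty),
      ‖B.sgnSum (sgnOf B z) F -
          (((F.inf' hne fun n => ‖B.coord n z‖)⁻¹ : ℝ) : 𝕜) • B.proj F z‖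
        ≤ (F.inf' hne fun n => ‖B.coord n z‖)⁻¹ * (C * ‖z‖) := by
  intro r
  induction r with
  | zero =>
    intro F hcard hgr hnz hne
    obtain ⟨b, rfl⟩ := Finset.card_eq_one.mp hcard
    have hb : B.coord b z ≠ 0 := hnz b (Finset.mem_singleton_self b)
    have hinf : ({b} : Finset ℕ).inf' hne (fun n => ‖B.coord n z‖) = ‖B.coord b z‖ := by
      simp
    rw [hinf]
    have : B.sgnSum (sgnOf B z) {b} - ((‖B.coord b z‖⁻¹ : ℝ) : 𝕜) • B.proj {b} z = 0 := by
      unfold BasisOf.sgnSum BasisOf.proj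
      rw [Finset.sum_singleton, Finset.sum_singleton, sgnOf_smul B z b hb, sub_self]
    rw [this, norm_zero]
    positivity
  | succ r ih =>
    intro F hcard hgr hnz hne
    obtain ⟨b, hb, hmin⟩ := F.exists_min_image (fun n => ‖B.coord n z‖) hne
    set F' := F.erase b with hF'
    have hcard' : F'.card = r + 1 := by
      rw [hF', Finset.card_erase_of_mem hb, hcard]
      omega
    have hne' : F'.Nonempty := Finset.card_pos.mp (by omega)
    have hsub' : F' ⊆ F := Finset.erase_subset b F
    have hgr' : B.IsGreedySet z F' := by
      intro a ha b' hb'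
      rcases eq_or_ne b' b with rfl | hbb
      · exact hmin a (hsub' ha)
      · exact hgr a (hsub' ha) b' (fun hmem => hb' (Finset.mem_erase.mpr ⟨hbb, hmem⟩))
    have hnz' : ∀ n ∈ F', B.coord n z ≠ 0 := fun n hn => hnz n (hsub' hn)
    have IH := ih F' hcard' hgr' hnz' hne'
    set g : ℕ → ℝ := fun n => ‖B.coord n z‖ with hg
    have hgpos : ∀ n ∈ F, 0 < g n := fun n hn => norm_pos_iff.mpr (hnz n hn)
    have hinfF : F.inf' hne g = g b :=
      le_antisymm (Finset.inf'_le g hb) (Finset.le_inf' hne g hmin)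
    set t' := F'.inf' hne' g with ht'
    have hbt' : g b ≤ t' := Finset.le_inf' hne' g (fun n hn => hmin n (hsub' hn))
    have ht'pos : 0 < t' := by
      obtain ⟨n, hn, hval⟩ := Finset.exists_mem_eq_inf' hne' g
      rw [ht', hval]; exact hgpos n (hsub' hn)
    have hgbpos : 0 < g b := hgpos b hb
    have hPnorm : ‖B.proj F' z‖ ≤ C * ‖z‖ := hqg z F' hne' hgr'
    have hsum1 : B.sgnSum (sgnOf B z) F = sgnOf B z b • B.e b + B.sgnSum (sgnOf B z) F' :=
      (Finset.add_sum_erase F _ hb).symm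
    have hsum2 : B.proj F z = B.coord b z • B.e b + B.proj F' z :=
      (Finset.add_sum_erase F _ hb).symm
    have hkey : B.sgnSum (sgnOf B z) F - (((F.inf' hne g)⁻¹ : ℝ) : 𝕜) • B.proj F z
        = (B.sgnSum (sgnOf B z) F' - ((t'⁻¹ : ℝ) : 𝕜) • B.proj F' z)
          + (((t'⁻¹ - (g b)⁻¹ : ℝ)) : 𝕜) • B.proj F' z := by
      rw [hinfF, hsum1, hsum2, smul_add, sgnOf_smul B z b (hnz b hb)]
      rw [RCLike.ofReal_sub, sub_smul]
      abel
    rw [hkey]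
    calc ‖_ + _‖ ≤ ‖B.sgnSum (sgnOf B z) F' - ((t'⁻¹ : ℝ) : 𝕜) • B.proj F' z‖
          + ‖(((t'⁻¹ - (g b)⁻¹ : ℝ)) : 𝕜) • B.proj F' z‖ := norm_add_le _ _
      _ ≤ t'⁻¹ * (C * ‖z‖) + ((g b)⁻¹ - t'⁻¹) * (C * ‖z‖) := by
          apply add_le_add IH
          rw [norm_smul, RCLike.norm_ofReal]
          have habs : |t'⁻¹ - (g b)⁻¹| = (g b)⁻¹ - t'⁻¹ := by
            rw [abs_of_nonpos (by
              have := one_div_le_one_div_of_le hgbpos hbt'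
              simp only [one_div] at this
              linarith)]
            ring
          rw [habs]
          apply mul_le_mul_of_nonneg_left hPnorm
          have := one_div_le_one_div_of_le hgbpos hbt'
          simp only [one_div] at this
          linarith
      _ = (F.inf' hne g)⁻¹ * (C * ‖z‖) := by rw [hinfF]; ring

lemma min_lemma (C : ℝ) (hC : 0 ≤ C) (hqg : B.QuasiGreedyWith C) (z : X)
    (F : Finset ℕ) (hne : F.Nonempty) (hgr : B.IsGreedySet z F)
    (t : ℝ) (ht : 0 < t) (hmin : ∀ n ∈ F, t ≤ ‖B.coord n z‖) :
    t * ‖B.sgnSum (sgnOf B z) F‖ ≤ 2 * C * ‖z‖ := by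
  have hnz : ∀ n ∈ F, B.coord n z ≠ 0 := by
    intro n hn
    have := hmin n hn
    intro h
    rw [h, norm_zero] at this
    linarith
  have hcard : F.card = (F.card - 1) + 1 := by
    have := Finset.card_pos.mpr hne; omega
  have key := abel_claim B C hC hqg z (F.card - 1) F hcard hgr hnz hne
  set tF := F.inf' hne fun n => ‖B.coord n z‖ with htF
  have httF : t ≤ tF := Finset.le_inf' hne _ hmin
  have htFpos : 0 < tF := lt_of_lt_of_le ht httF
  have hP : ‖B.proj F z‖ ≤ C * ‖z‖ := hqg z F hne hgr
  have hbound : ‖B.sgnSum (sgnOf B z) F‖ ≤ tF⁻¹ * (2 * C * ‖z‖) := by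
    calc ‖B.sgnSum (sgnOf B z) F‖
        ≤ ‖B.sgnSum (sgnOf B z) F - ((tF⁻¹ : ℝ) : 𝕜) • B.proj F z‖
          + ‖((tF⁻¹ : ℝ) : 𝕜) • B.proj F z‖ := by
          nth_rewrite 1 [show B.sgnSum (sgnOf B z) F
            = (B.sgnSum (sgnOf B z) F - ((tF⁻¹ : ℝ) : 𝕜) • B.proj F z)
              + ((tF⁻¹ : ℝ) : 𝕜) • B.proj F z by abel]
          exact norm_add_le _ _
      _ ≤ tF⁻¹ * (C * ‖z‖) + tF⁻¹ * (C * ‖z‖) := by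
          apply add_le_add key
          rw [norm_smul, RCLike.norm_ofReal, abs_of_nonneg (by positivity)]
          exact mul_le_mul_of_nonneg_left hP (by positivity)
      _ = tF⁻¹ * (2 * C * ‖z‖) := by ring
  calc t * ‖B.sgnSum (sgnOf B z) F‖ ≤ t * (tF⁻¹ * (2 * C * ‖z‖)) :=
        mul_le_mul_of_nonneg_left hbound ht.le
    _ = (t * tF⁻¹) * (2 * C * ‖z‖) := by ring
    _ ≤ 1 * (2 * C * ‖z‖) := by
        apply mul_le_mul_of_nonneg_right _ (by positivity)
        rw [← div_eq_mul_inv, div_le_one htFpos]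
        exact httF
    _ = 2 * C * ‖z‖ := one_mul _
end Aux3

section Aux4
open RCLike Finset
variable {𝕜 : Type*} {X : Type*} [RCLike 𝕜] [NormedAddCommGroup X] [NormedSpace 𝕜 X]
variable (B : BasisOf 𝕜 X)

lemma sgnSum_subset_le (C : ℝ) (hC : 0 ≤ C) (hqg : B.QuasiGreedyWith C)
    (F S : Finset ℕ) (hS : S ⊆ F) (ε : ℕ → 𝕜) (hε : ∀ n, ‖ε n‖ = 1) :
    ‖B.sgnSum ε S‖ ≤ C * ‖B.sgnSum ε F‖ := by
  rcases S.eq_empty_or_nonempty with rfl | hne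
  · rw [show B.sgnSum ε ∅ = 0 from Finset.sum_empty, norm_zero]
    positivity
  · have hgr : B.IsGreedySet (B.sgnSum ε F) S := by
      intro a ha b hb
      rw [coord_sgnSum, coord_sgnSum, if_pos (hS ha), hε]
      split_ifs with h
      · rw [hε]
      · rw [norm_zero]; norm_num
    have hproj : B.proj S (B.sgnSum ε F) = B.sgnSum ε S := by
      apply Finset.sum_congr rfl
      intro n hn
      rw [coord_sgnSum, if_pos (hS hn)]
    have := hqg (B.sgnSum ε F) S hne hgr
    rwa [hproj] at this

lemma vertex_bound_sgn (C : ℝ) (hC : 0 ≤ C) (hqg : B.QuasiGreedyWith C)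
    (F : Finset ℕ) (ε : ℕ → 𝕜) (hε : ∀ n, ‖ε n‖ = 1)
    (θ : ℕ → ℝ) (hθ : ∀ n, θ n = 1 ∨ θ n = -1) :
    ‖∑ n ∈ F, ((θ n : 𝕜)) • (ε n • B.e n)‖ ≤ 2 * C * ‖B.sgnSum ε F‖ := by
  have hsplit : ∑ n ∈ F, ((θ n : 𝕜)) • (ε n • B.e n)
      = B.sgnSum ε (F.filter fun n => θ n = 1)
        - B.sgnSum ε (F.filter fun n => ¬ (θ n = 1)) := by
    rw [← Finset.sum_filter_add_sum_filter_not F (fun n => θ n = 1)]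
    have h1 : ∑ n ∈ F.filter (fun n => θ n = 1), ((θ n : 𝕜)) • (ε n • B.e n)
        = B.sgnSum ε (F.filter fun n => θ n = 1) := by
      apply Finset.sum_congr rfl
      intro n hn
      rw [(Finset.mem_filter.mp hn).2]
      norm_num
    have h2 : ∑ n ∈ F.filter (fun n => ¬ (θ n = 1)), ((θ n : 𝕜)) • (ε n • B.e n)
        = - B.sgnSum ε (F.filter fun n => ¬ (θ n = 1)) := by
      unfold BasisOf.sgnSum
      rw [← Finset.sum_neg_distrib]
      apply Finset.sum_congr rfl
      intro n hn
      have : θ n = -1 := (hθ n).resolve_left (Finset.mem_filter.mp hn).2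
      rw [this]
      push_cast
      rw [neg_smul, one_smul]
    rw [h1, h2]
    abel
  rw [hsplit]
  calc ‖_ - _‖ ≤ ‖B.sgnSum ε (F.filter fun n => θ n = 1)‖
      + ‖B.sgnSum ε (F.filter fun n => ¬ (θ n = 1))‖ := norm_sub_le _ _
    _ ≤ C * ‖B.sgnSum ε F‖ + C * ‖B.sgnSum ε F‖ := by
        apply add_le_add
        · exact sgnSum_subset_le B C hC hqg F _ (Finset.filter_subset _ _) ε hε
        · exact sgnSum_subset_le B C hC hqg F _ (Finset.filter_subset _ _) ε hε
    _ = 2 * C * ‖B.sgnSum ε F‖ := by ring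

lemma ones_le_sgnSum (C : ℝ) (hC : 0 ≤ C) (hqg : B.QuasiGreedyWith C)
    (F : Finset ℕ) (ε : ℕ → 𝕜) (hε : ∀ n, ‖ε n‖ = 1) :
    ‖B.ones F‖ ≤ 4 * C * ‖B.sgnSum ε F‖ := by
  have hones : B.ones F = ∑ n ∈ F, (ε n)⁻¹ • (ε n • B.e n) := by
    apply Finset.sum_congr rfl
    intro n _
    rw [smul_smul, inv_mul_cancel₀ (by rw [← norm_ne_zero_iff, hε n]; norm_num), one_smul]
  rw [hones]
  have := convexK F (fun n => ε n • B.e n) (fun n => (ε n)⁻¹) (2 * C * ‖B.sgnSum ε F‖)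
    (fun θ hθ => vertex_bound_sgn B C hC hqg F ε hε θ hθ)
    (fun n _ => by rw [norm_inv, hε n]; norm_num)
  calc ‖∑ n ∈ F, (ε n)⁻¹ • (ε n • B.e n)‖ ≤ 2 * (2 * C * ‖B.sgnSum ε F‖) := this
    _ = 4 * C * ‖B.sgnSum ε F‖ := by ring

lemma projSeq_eq_proj (seq : ℕ → ℕ) (hseq : StrictMono seq) (k : ℕ) (x : X) :
    B.projSeq seq k x = B.proj ((Finset.range k).image seq) x := by
  unfold BasisOf.projSeq BasisOf.proj
  rw [Finset.sum_image (fun a _ b _ h => hseq.injective h)]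
end Aux4

section Aux5
open RCLike Finset
variable {𝕜 : Type*} {X : Type*} [RCLike 𝕜] [NormedAddCommGroup X] [NormedSpace 𝕜 X]
variable (B : BasisOf 𝕜 X)

lemma projSeq_zero' (seq : ℕ → ℕ) (x : X) : B.projSeq seq 0 x = 0 := by
  unfold BasisOf.projSeq
  rw [Finset.range_zero, Finset.sum_empty]

lemma spg_imp_qg (seq : ℕ → ℕ) : B.SPG seq → B.QuasiGreedy := by
  rintro ⟨C, hC1, h⟩
  refine ⟨C + 1, ?_⟩
  intro x A hne hgr
  have hm : 1 ≤ A.card := Finset.card_pos.mpr hne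
  have := h x A.card hm A rfl hgr 0 (Nat.zero_le _)
  rw [projSeq_zero', sub_zero] at this
  calc ‖B.proj A x‖ = ‖x - (x - B.proj A x)‖ := by congr 1; abel
    _ ≤ ‖x‖ + ‖x - B.proj A x‖ := norm_sub_le _ _
    _ ≤ ‖x‖ + C * ‖x‖ := by linarith
    _ = (C + 1) * ‖x‖ := by ring

lemma coord_add' (n : ℕ) (x y : X) : B.coord n (x + y) = B.coord n x + B.coord n y :=
  map_add _ _ _

lemma coord_ones (n : ℕ) (S : Finset ℕ) :
    B.coord n (B.ones S) = if n ∈ S then 1 else 0 := by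
  have : B.ones S = ∑ m ∈ S, (1 : 𝕜) • B.e m := by
    apply Finset.sum_congr rfl; intro m _; rw [one_smul]
  rw [this, coord_sum]

lemma pslc_imp_sc (seq : ℕ → ℕ) : B.PSLC seq → B.Superconservative seq := by
  rintro ⟨C, hC1, h⟩
  refine ⟨C, lt_of_lt_of_le one_pos hC1, ?_⟩
  intro A D hT ε δ hε hδ
  have := h 0 (fun n => by rw [map_zero, norm_zero]; norm_num) A D hT
    (fun d _ => map_zero _)
    (fun a ha j hj hr => by
      rcases hj with hj | hj
      · exact hT.2.2 a ha j hj hr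
      · exact absurd (map_zero (B.coord j)) hj)
    ε δ hε hδ
  rwa [zero_add, zero_add] at this

lemma sc_imp_cons (seq : ℕ → ℕ) : B.Superconservative seq → B.Conservative seq := by
  rintro ⟨C, hC, h⟩
  refine ⟨C, hC, ?_⟩
  intro A D hT
  have := h A D hT (fun _ => 1) (fun _ => 1) (fun _ => norm_one) (fun _ => norm_one)
  have e1 : B.sgnSum (fun _ => (1:𝕜)) A = B.ones A := by
    apply Finset.sum_congr rfl; intro n _; rw [one_smul]
  have e2 : B.sgnSum (fun _ => (1:𝕜)) D = B.ones D := by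
    apply Finset.sum_congr rfl; intro n _; rw [one_smul]
  rwa [e1, e2] at this
end Aux5

section Aux6
open RCLike Finset
variable {𝕜 : Type*} {X : Type*} [RCLike 𝕜] [NormedAddCommGroup X] [NormedSpace 𝕜 X]
variable (B : BasisOf 𝕜 X)

lemma spg_imp_pslc (seq : ℕ → ℕ) (hseq : StrictMono seq) : B.SPG seq → B.PSLC seq := by
  rintro ⟨C, hC1, h⟩
  refine ⟨C, hC1, ?_⟩
  intro x hx A D hT hDx hAlt ε δ hε hδ
  obtain ⟨hAsub, hcardAD, hlt⟩ := hT
  have hAx : ∀ a ∈ A, B.coord a x = 0 := by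
    intro a ha
    by_contra hne
    exact lt_irrefl a (hAlt a ha a (Or.inr hne) (hAsub (Finset.mem_coe.mpr ha)))
  have hAD : ∀ a ∈ A, a ∉ D := by
    intro a ha had
    exact lt_irrefl a (hlt a ha a had (hAsub (Finset.mem_coe.mpr ha)))
  rcases A.eq_empty_or_nonempty with rfl | hAne
  · rw [show B.sgnSum ε ∅ = 0 from Finset.sum_empty, add_zero]
    rcases D.eq_empty_or_nonempty with rfl | hDne
    · rw [show B.sgnSum δ ∅ = 0 from Finset.sum_empty, add_zero]
      nlinarith [norm_nonneg x]
    · set y := x + B.sgnSum δ D with hy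
      have hcy : ∀ n, B.coord n y = B.coord n x + (if n ∈ D then δ n else 0) := by
        intro n; rw [hy, map_add, coord_sgnSum]
      have hgrD : B.IsGreedySet y D := by
        intro a ha b hb
        rw [hcy, hcy, if_pos ha, if_neg hb, add_zero, hDx a ha, zero_add, hδ]
        exact hx b
      have hm : 1 ≤ D.card := Finset.card_pos.mpr hDne
      have hproj : B.proj D y = B.sgnSum δ D := by
        apply Finset.sum_congr rfl
        intro n hn
        rw [hcy, if_pos hn, hDx n hn, zero_add]
      have hspg := h y D.card hm D rfl hgrD 0 (Nat.zero_le _)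
      rw [projSeq_zero', sub_zero, hproj] at hspg
      have hxy : y - B.sgnSum δ D = x := by rw [hy]; abel
      rwa [hxy] at hspg
  · obtain ⟨i0, hi0⟩ := hAsub (Finset.mem_coe.mpr (A.max'_mem hAne))
    set aM := A.max' hAne with haM
    set k := i0 + 1 with hk
    set P := (Finset.range k).image seq with hP
    have hPle : ∀ n ∈ P, n ≤ aM := by
      intro n hn
      obtain ⟨i, hi, rfl⟩ := Finset.mem_image.mp hn
      have hi' : i < k := Finset.mem_range.mp hi
      calc seq i ≤ seq i0 := hseq.monotone (by omega)
        _ = aM := hi0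
    have hAP : A ⊆ P := by
      intro a ha
      obtain ⟨j, hj⟩ := hAsub (Finset.mem_coe.mpr ha)
      have hle : a ≤ aM := A.le_max' a ha
      have hji : j ≤ i0 := by
        by_contra hgt
        push_neg at hgt
        have := hseq (show i0 < j by omega)
        omega
      exact Finset.mem_image.mpr ⟨j, Finset.mem_range.mpr (by omega), hj⟩
    have hPD : ∀ n ∈ P, n ∉ D := by
      intro n hn hnD
      have h1 := hlt aM (A.max'_mem hAne) n hnD (by
        obtain ⟨i, _, rfl⟩ := Finset.mem_image.mp hn
        exact ⟨i, rfl⟩)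
      have h2 := hPle _ hn
      omega
    have hPx : ∀ n ∈ P, n ∉ A → B.coord n x = 0 := by
      intro n hn hnA
      by_contra hne
      have h1 := hAlt aM (A.max'_mem hAne) n (Or.inr hne) (by
        obtain ⟨i, _, rfl⟩ := Finset.mem_image.mp hn
        exact ⟨i, rfl⟩)
      have h2 := hPle _ hn
      omega
    set E := P \ A with hE
    set G := E ∪ D with hG
    set y := x + B.sgnSum ε A + B.ones E + B.sgnSum δ D with hy
    have hED : Disjoint E D := by
      rw [Finset.disjoint_left]
      intro n hn
      exact hPD n (Finset.mem_sdiff.mp hn).1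
    have hcy : ∀ n, B.coord n y = B.coord n x + (if n ∈ A then ε n else 0)
        + (if n ∈ E then 1 else 0) + (if n ∈ D then δ n else 0) := by
      intro n
      rw [hy, map_add, map_add, map_add, coord_sgnSum, coord_ones, coord_sgnSum]
    have hcyA : ∀ n ∈ A, B.coord n y = ε n := by
      intro n hn
      rw [hcy, if_pos hn, if_neg (fun hE' => (Finset.mem_sdiff.mp hE').2 hn),
        if_neg (hAD n hn), hAx n hn]
      ring
    have hcyE : ∀ n ∈ E, B.coord n y = 1 := by
      intro n hn
      have hnP := (Finset.mem_sdiff.mp hn).1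
      have hnA := (Finset.mem_sdiff.mp hn).2
      rw [hcy, if_pos hn, if_neg hnA, if_neg (hPD n hnP), hPx n hnP hnA]
      ring
    have hcyD : ∀ n ∈ D, B.coord n y = δ n := by
      intro n hn
      have hnE : n ∉ E := fun hE' => hPD n (Finset.mem_sdiff.mp hE').1 hn
      have hnA : n ∉ A := fun hA' => hAD n hA' hn
      rw [hcy, if_neg hnA, if_neg hnE, if_pos hn, hDx n hn]
      ring
    have hcyO : ∀ n, n ∉ A → n ∉ E → n ∉ D → B.coord n y = B.coord n x := by
      intro n h1 h2 h3
      rw [hcy, if_neg h1, if_neg h2, if_neg h3]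
      ring
    have hgrG : B.IsGreedySet y G := by
      intro a ha b hb
      have ha1 : ‖B.coord a y‖ = 1 := by
        rcases Finset.mem_union.mp ha with h' | h'
        · rw [hcyE a h']; exact norm_one
        · rw [hcyD a h']; exact hδ a
      rw [ha1]
      have hbE : b ∉ E := fun h' => hb (Finset.mem_union_left _ h')
      have hbD : b ∉ D := fun h' => hb (Finset.mem_union_right _ h')
      by_cases hbA : b ∈ A
      · rw [hcyA b hbA, hε]
      · rw [hcyO b hbA hbE hbD]
        exact hx b
    have hPcard : P.card = k := by
      rw [hP, Finset.card_image_of_injective _ hseq.injective, Finset.card_range]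
    have hEcard : E.card = k - A.card := by rw [hE, Finset.card_sdiff_of_subset hAP, hPcard]
    have hAcard_le_k : A.card ≤ k := hPcard ▸ Finset.card_le_card hAP
    have hAcard_pos : 1 ≤ A.card := Finset.card_pos.mpr hAne
    have hGcard : G.card = E.card + D.card := Finset.card_union_of_disjoint hED
    have hm1 : 1 ≤ G.card := by omega
    have hkG : k ≤ G.card := by omega
    have hprojG : B.proj G y = B.ones E + B.sgnSum δ D := by
      rw [hG, proj_union B hED]
      congr 1
      · apply Finset.sum_congr rfl; intro n hn; rw [hcyE n hn, one_smul]
      · apply Finset.sum_congr rfl; intro n hn; rw [hcyD n hn]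
    have hprojP : B.projSeq seq k y = B.sgnSum ε A + B.ones E := by
      rw [projSeq_eq_proj B seq hseq, ← hP]
      have hPAE : P = A ∪ E := by rw [hE, Finset.union_sdiff_of_subset hAP]
      rw [hPAE, proj_union B Finset.disjoint_sdiff]
      congr 1
      · apply Finset.sum_congr rfl; intro n hn; rw [hcyA n hn]
      · apply Finset.sum_congr rfl; intro n hn; rw [hcyE n hn, one_smul]
    have hspg := h y G.card hm1 G rfl hgrG k hkG
    rw [hprojG, hprojP] at hspg
    have e1 : y - (B.ones E + B.sgnSum δ D) = x + B.sgnSum ε A := by rw [hy]; abel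
    have e2 : y - (B.sgnSum ε A + B.ones E) = x + B.sgnSum δ D := by rw [hy]; abel
    rwa [e1, e2] at hspg
end Aux6

section Aux7
open RCLike Finset
variable {𝕜 : Type*} {X : Type*} [RCLike 𝕜] [NormedAddCommGroup X] [NormedSpace 𝕜 X]
variable (B : BasisOf 𝕜 X)

lemma qg_cons_imp_spg (seq : ℕ → ℕ) (hseq : StrictMono seq) :
    B.QuasiGreedy → B.Conservative seq → B.SPG seq := by
  rintro ⟨C₀, hqg₀⟩ ⟨C₂₀, hC₂₀, hcons₀⟩
  set C₁ := max C₀ 1 with hC₁def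
  have hC₁ : 1 ≤ C₁ := le_max_right _ _
  have hC₁0 : 0 ≤ C₁ := by linarith
  have hqg : B.QuasiGreedyWith C₁ := fun x A hne hgr =>
    le_trans (hqg₀ x A hne hgr) (mul_le_mul_of_nonneg_right (le_max_left _ _) (norm_nonneg _))
  set C₂ := max C₂₀ 1 with hC₂def
  have hC₂ : 1 ≤ C₂ := le_max_right _ _
  have hcons : B.ConservativeWith seq C₂ := fun A D hT =>
    le_trans (hcons₀ A D hT) (mul_le_mul_of_nonneg_right (le_max_left _ _) (norm_nonneg _))
  refine ⟨1 + C₁ + 32 * C₁ ^ 2 * C₂, by nlinarith, ?_⟩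
  intro x m hm A hAcard hgr k hk
  set P := (Finset.range k).image seq with hP
  set z := x - B.projSeq seq k x with hz
  have hzP : z = x - B.proj P x := by rw [hz, projSeq_eq_proj B seq hseq]
  have hPcard : P.card = k := by
    rw [hP, Finset.card_image_of_injective _ hseq.injective, Finset.card_range]
  have hAne : A.Nonempty := Finset.card_pos.mp (by omega)
  have hcoordz : ∀ n, B.coord n z = if n ∈ P then 0 else B.coord n x := by
    intro n
    rw [hzP, map_sub, coord_proj]
    split_ifs <;> simp
  set E := P \ A with hE
  set F := A \ P with hF
  -- cardinality comparison
  have hEF : E.card ≤ F.card := by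
    have h1 : E.card + (P ∩ A).card = P.card := Finset.card_sdiff_add_card_inter P A
    have h2 : F.card + (A ∩ P).card = A.card := Finset.card_sdiff_add_card_inter A P
    rw [Finset.inter_comm] at h1
    omega
  -- decomposition
  have hd1 : Disjoint (A ∩ P) E := by
    rw [Finset.disjoint_left]
    intro n hn h'
    exact (Finset.mem_sdiff.mp h').2 (Finset.mem_inter.mp hn).1
  have hd2 : Disjoint (A ∩ P) F := by
    rw [Finset.disjoint_left]
    intro n hn h'
    exact (Finset.mem_sdiff.mp h').2 (Finset.mem_inter.mp hn).2
  have hsplitP : A ∩ P ∪ E = P := by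
    rw [hE]
    ext n
    simp only [Finset.mem_union, Finset.mem_inter, Finset.mem_sdiff]
    tauto
  have hsplitA : A ∩ P ∪ F = A := by
    rw [hF]
    ext n
    simp only [Finset.mem_union, Finset.mem_inter, Finset.mem_sdiff]
    tauto
  have h1 : B.proj P x = B.proj (A ∩ P) x + B.proj E x := by
    rw [← proj_union B hd1, hsplitP]
  have h2 : B.proj A x = B.proj (A ∩ P) x + B.proj F x := by
    rw [← proj_union B hd2, hsplitA]
  have hdecomp : x - B.proj A x = z + B.proj E x - B.proj F x := by
    rw [hzP, h1, h2]
    abel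
  -- F is a greedy set of z, with the same coordinates as x
  have hcoordF : ∀ n ∈ F, B.coord n z = B.coord n x := by
    intro n hn
    rw [hcoordz, if_neg (Finset.mem_sdiff.mp hn).2]
  have hFgr : B.IsGreedySet z F := by
    intro a ha b hb
    rw [hcoordF a ha]
    by_cases hbP : b ∈ P
    · rw [hcoordz, if_pos hbP, norm_zero]
      exact norm_nonneg _
    · rw [hcoordz, if_neg hbP]
      have hbA : b ∉ A := fun h' => hb (Finset.mem_sdiff.mpr ⟨h', hbP⟩)
      exact hgr a (Finset.mem_sdiff.mp ha).1 b hbA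
  have hT2 : ‖B.proj F x‖ ≤ C₁ * ‖z‖ := by
    rcases F.eq_empty_or_nonempty with hFe | hFne
    · rw [hFe, show B.proj ∅ x = 0 from Finset.sum_empty, norm_zero]
      positivity
    · have hprojF : B.proj F x = B.proj F z :=
        proj_congr B (fun n hn => (hcoordF n hn).symm)
      rw [hprojF]
      exact hqg z F hFne hFgr
  have hT3 : ‖B.proj E x‖ ≤ 32 * C₁ ^ 2 * C₂ * ‖z‖ := by
    rcases F.eq_empty_or_nonempty with hFe | hFne
    · have hEe : E = ∅ := Finset.card_eq_zero.mp (by rw [hFe] at hEF; simpa using hEF)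
      rw [hEe, show B.proj ∅ x = 0 from Finset.sum_empty, norm_zero]
      positivity
    · set t := A.inf' hAne (fun n => ‖B.coord n x‖) with ht
      have htE : ∀ n ∈ E, ‖B.coord n x‖ ≤ t := by
        intro n hn
        exact Finset.le_inf' hAne _ (fun a ha => hgr a ha n (Finset.mem_sdiff.mp hn).2)
      rcases le_or_gt t 0 with ht0 | htpos
      · have : B.proj E x = 0 := by
          apply Finset.sum_eq_zero
          intro n hn
          have h1 := htE n hn
          have h2 : B.coord n x = 0 := by
            rw [← norm_le_zero_iff]; linarith
          rw [h2, zero_smul]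
        rw [this, norm_zero]
        positivity
      · have htF : ∀ n ∈ F, t ≤ ‖B.coord n z‖ := by
          intro n hn
          rw [hcoordF n hn]
          exact Finset.inf'_le _ (Finset.mem_sdiff.mp hn).1
        have hml := min_lemma B C₁ hC₁0 hqg z F hFne hFgr t htpos htF
        have hones := ones_le_sgnSum B C₁ hC₁0 hqg F (B.sgnOf z) (norm_sgnOf B z)
        -- TPair (S, F) for any S ⊆ E
        have hTsub : ∀ S : Finset ℕ, S ⊆ E → TPair seq S F := by
          intro S hSE
          refine ⟨?_, le_trans (Finset.card_le_card hSE) hEF, ?_⟩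
          · intro n hn
            have hnP : n ∈ P := (Finset.mem_sdiff.mp (hSE hn)).1
            obtain ⟨i, _, hi⟩ := Finset.mem_image.mp hnP
            exact ⟨i, hi⟩
          · intro a ha f hf hfr
            obtain ⟨i, hi, hia⟩ := Finset.mem_image.mp (Finset.mem_sdiff.mp (hSE ha)).1
            obtain ⟨j, hj⟩ := hfr
            have hjk : ¬ j < k := by
              intro hjk
              exact (Finset.mem_sdiff.mp hf).2
                (Finset.mem_image.mpr ⟨j, Finset.mem_range.mpr hjk, hj⟩)
            have := hseq (show i < j by
              have := Finset.mem_range.mp hi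
              omega)
            omega
        have hvertE : ∀ θ : ℕ → ℝ, (∀ n, θ n = 1 ∨ θ n = -1) →
            ‖∑ n ∈ E, ((θ n : 𝕜)) • B.e n‖ ≤ 2 * C₂ * ‖B.ones F‖ := by
          intro θ hθ
          have hsplit : ∑ n ∈ E, ((θ n : 𝕜)) • B.e n
              = B.ones (E.filter fun n => θ n = 1)
                - B.ones (E.filter fun n => ¬ (θ n = 1)) := by
            rw [← Finset.sum_filter_add_sum_filter_not E (fun n => θ n = 1)]
            have h1 : ∑ n ∈ E.filter (fun n => θ n = 1), ((θ n : 𝕜)) • B.e n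
                = B.ones (E.filter fun n => θ n = 1) := by
              apply Finset.sum_congr rfl
              intro n hn
              rw [(Finset.mem_filter.mp hn).2]
              norm_num
            have h2 : ∑ n ∈ E.filter (fun n => ¬ (θ n = 1)), ((θ n : 𝕜)) • B.e n
                = - B.ones (E.filter fun n => ¬ (θ n = 1)) := by
              unfold BasisOf.ones
              rw [← Finset.sum_neg_distrib]
              apply Finset.sum_congr rfl
              intro n hn
              have : θ n = -1 := (hθ n).resolve_left (Finset.mem_filter.mp hn).2
              rw [this]
              push_cast
              rw [neg_smul, one_smul]
            rw [h1, h2]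
            abel
          rw [hsplit]
          calc ‖_ - _‖ ≤ ‖B.ones (E.filter fun n => θ n = 1)‖
              + ‖B.ones (E.filter fun n => ¬ (θ n = 1))‖ := norm_sub_le _ _
            _ ≤ C₂ * ‖B.ones F‖ + C₂ * ‖B.ones F‖ := by
                apply add_le_add
                · exact hcons _ F (hTsub _ (Finset.filter_subset _ _))
                · exact hcons _ F (hTsub _ (Finset.filter_subset _ _))
            _ = 2 * C₂ * ‖B.ones F‖ := by ring
        have hconv := convexK E B.e (fun n => ((t⁻¹ : ℝ) : 𝕜) * B.coord n x)
          (2 * C₂ * ‖B.ones F‖) hvertE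
          (by
            intro n hn
            rw [norm_mul, RCLike.norm_ofReal, abs_of_nonneg (by positivity)]
            calc t⁻¹ * ‖B.coord n x‖ ≤ t⁻¹ * t :=
                mul_le_mul_of_nonneg_left (htE n hn) (by positivity)
              _ = 1 := inv_mul_cancel₀ (ne_of_gt htpos))
        have hprojE : B.proj E x = ((t : ℝ) : 𝕜) • ∑ n ∈ E, (((t⁻¹ : ℝ) : 𝕜) * B.coord n x) • B.e n := by
          rw [Finset.smul_sum]
          apply Finset.sum_congr rfl
          intro n _
          rw [smul_smul, ← mul_assoc, ← RCLike.ofReal_mul,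
            mul_inv_cancel₀ (ne_of_gt htpos)]
          norm_num
        have hnormE : ‖B.proj E x‖ ≤ t * (2 * (2 * C₂ * ‖B.ones F‖)) := by
          rw [hprojE, norm_smul, RCLike.norm_ofReal, abs_of_pos htpos]
          exact mul_le_mul_of_nonneg_left hconv (le_of_lt htpos)
        -- now combine: t * ‖ones F‖ ≤ 4C₁ * (t * ‖sgnSum‖) ≤ 8 C₁² ‖z‖
        have hcomb : t * ‖B.ones F‖ ≤ 8 * C₁ ^ 2 * ‖z‖ := by
          calc t * ‖B.ones F‖ ≤ t * (4 * C₁ * ‖B.sgnSum (B.sgnOf z) F‖) :=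
              mul_le_mul_of_nonneg_left hones (le_of_lt htpos)
            _ = 4 * C₁ * (t * ‖B.sgnSum (B.sgnOf z) F‖) := by ring
            _ ≤ 4 * C₁ * (2 * C₁ * ‖z‖) := by
                apply mul_le_mul_of_nonneg_left hml (by positivity)
            _ = 8 * C₁ ^ 2 * ‖z‖ := by ring
        calc ‖B.proj E x‖ ≤ t * (2 * (2 * C₂ * ‖B.ones F‖)) := hnormE
          _ = 4 * C₂ * (t * ‖B.ones F‖) := by ring
          _ ≤ 4 * C₂ * (8 * C₁ ^ 2 * ‖z‖) := by
              apply mul_le_mul_of_nonneg_left hcomb (by positivity)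
          _ = 32 * C₁ ^ 2 * C₂ * ‖z‖ := by ring
  calc ‖x - B.proj A x‖ = ‖z + B.proj E x - B.proj F x‖ := by rw [hdecomp]
    _ ≤ ‖z + B.proj E x‖ + ‖B.proj F x‖ := norm_sub_le _ _
    _ ≤ ‖z‖ + ‖B.proj E x‖ + ‖B.proj F x‖ := by
        have := norm_add_le z (B.proj E x)
        linarith
    _ ≤ ‖z‖ + 32 * C₁ ^ 2 * C₂ * ‖z‖ + C₁ * ‖z‖ := by linarith
    _ = (1 + C₁ + 32 * C₁ ^ 2 * C₂) * ‖z‖ := by ring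
    _ = (1 + C₁ + 32 * C₁ ^ 2 * C₂) * ‖x - B.projSeq seq k x‖ := by rw [← hz]
end Aux7

end BasisOf

/-- A Banach space over `𝕜` equipped with a basis. -/
structure BanachWithBasis (𝕜 : Type*) [RCLike 𝕜] where
  carrier : Type
  [grp : NormedAddCommGroup carrier]
  [mod : NormedSpace 𝕜 carrier]
  [comp : CompleteSpace carrier]
  basis : BasisOf 𝕜 carrier

attribute [instance] BanachWithBasis.grp BanachWithBasis.mod BanachWithBasis.comp

/-- For a basis of a Banach space, being (𝐧, strong partially greedy) is
equivalent to being quasi-greedy together with any one of: (𝐧, PSLC),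
(𝐧, superconservative), (𝐧, conservative). -/
theorem statement0 {𝕜 X : Type*} [RCLike 𝕜] [NormedAddCommGroup X] [NormedSpace 𝕜 X]
    [CompleteSpace X] (B : BasisOf 𝕜 X) (seq : ℕ → ℕ) (hseq : StrictMono seq) :
    (B.SPG seq ↔ B.QuasiGreedy ∧ B.PSLC seq) ∧
    (B.SPG seq ↔ B.QuasiGreedy ∧ B.Superconservative seq) ∧
    (B.SPG seq ↔ B.QuasiGreedy ∧ B.Conservative seq) := by
  have h1 : B.SPG seq → B.QuasiGreedy := BasisOf.spg_imp_qg B seq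
  have h2 : B.SPG seq → B.PSLC seq := BasisOf.spg_imp_pslc B seq hseq
  have h3 : B.PSLC seq → B.Superconservative seq := BasisOf.pslc_imp_sc B seq
  have h4 : B.Superconservative seq → B.Conservative seq := BasisOf.sc_imp_cons B seq
  have h5 : B.QuasiGreedy → B.Conservative seq → B.SPG seq :=
    BasisOf.qg_cons_imp_spg B seq hseq
  refine ⟨⟨fun h => ⟨h1 h, h2 h⟩, fun ⟨hq, hp⟩ => h5 hq (h4 (h3 hp))⟩,
    ⟨fun h => ⟨h1 h, h3 (h2 h)⟩, fun ⟨hq, hs⟩ => h5 hq (h4 hs)⟩,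
    ⟨fun h => ⟨h1 h, h4 (h3 (h2 h))⟩, fun ⟨hq, hc⟩ => h5 hq hc⟩⟩
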